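/- For every prime p and every integer i with 1 ≤ i ≤ p−1, the binomial coefficient C(p,i) divided by p, i.e. (p−1)!/(i!·(p−i)!), satisfies −(p−1)!/(i!·(p−i)!) ≡ (−1)^i · i⁻¹ (mod p), where i⁻¹ denotes the multiplicative inverse of i modulo p. -/

import Mathlib

/-- For every prime `p` and `1 ≤ i ≤ p-1`, one has
`-(p-1)!/(i!·(p-i)!) ≡ (-1)^i · i⁻¹ (mod p)`. -/
theorem stmt_0 (p i : ℕ) (hp : p.Prime) (h1 : 1 ≤ i) (h2 : i ≤ p - 1) :
    -((Nat.factorial (p - 1) / (Nat.factorial i * Nat.factorial (p - i)) : ℕ) : ZMod p)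
      = (-1) ^ i * (i : ZMod p)⁻¹ := by
  have hfield : Fact p.Prime := ⟨hp⟩
  have hp1 : 1 ≤ p := hp.one_lt.le
  have hip : i < p := lt_of_le_of_lt h2 (Nat.sub_lt (by omega) one_pos)
  have hiip : i ≤ p := hip.le
  obtain ⟨m, hm⟩ := hp.dvd_choose_self (by omega) hip
  -- (p-1)! = m * (i! * (p-i)!)
  have hfac : Nat.choose p i * i.factorial * (p - i).factorial = p.factorial :=
    Nat.choose_mul_factorial_mul_factorial hiip
  have hpfac : p.factorial = p * (p - 1).factorial :=
    (Nat.mul_factorial_pred (by omega : p ≠ 0)).symm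
  have hkey : (p - 1).factorial = m * (i.factorial * (p - i).factorial) := by
    have : p * (p - 1).factorial = p * (m * (i.factorial * (p - i).factorial)) := by
      rw [← hpfac, ← hfac, hm]; ring
    exact Nat.eq_of_mul_eq_mul_left (by omega) this
  have hdiv : (p - 1).factorial / (i.factorial * (p - i).factorial) = m := by
    rw [hkey, Nat.mul_div_cancel _ (Nat.mul_pos (Nat.factorial_pos _) (Nat.factorial_pos _))]
  rw [hdiv]
  -- m * i = choose (p-1) (i-1)
  have hsucc := Nat.add_one_mul_choose_eq (p - 1) (i - 1)
  rw [show p - 1 + 1 = p by omega,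
    show i - 1 + 1 = i by omega] at hsucc
  have hmi : m * i = Nat.choose (p - 1) (i - 1) := by
    have : p * (m * i) = p * Nat.choose (p - 1) (i - 1) := by
      rw [hsucc, hm]; ring
    exact Nat.eq_of_mul_eq_mul_left (by omega) this
  -- choose (p-1) (i-1) ≡ (-1)^(i-1) mod p
  have hdf : Nat.descFactorial (p - 1) (i - 1) = (i - 1).factorial * Nat.choose (p - 1) (i - 1) :=
    Nat.descFactorial_eq_factorial_mul_choose _ _
  have hcast : ((Nat.descFactorial (p - 1) (i - 1) : ℕ) : ZMod p)
      = (-1) ^ (i - 1) * ((i - 1).factorial : ZMod p) :=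
    ZMod.cast_descFactorial (by omega)
  have hfne : ((i - 1).factorial : ZMod p) ≠ 0 := by
    rw [Ne, ZMod.natCast_eq_zero_iff]
    intro h
    exact absurd (hp.dvd_factorial.mp h) (by omega)
  have hchoose : ((Nat.choose (p - 1) (i - 1) : ℕ) : ZMod p) = (-1) ^ (i - 1) := by
    rw [hdf, Nat.cast_mul] at hcast
    exact mul_left_cancel₀ hfne (by rw [hcast]; ring)
  have hine : (i : ZMod p) ≠ 0 := by
    rw [Ne, ZMod.natCast_eq_zero_iff]
    intro h
    exact absurd (Nat.le_of_dvd (by omega) h) (by omega)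
  have hmval : (m : ZMod p) = (-1) ^ (i - 1) * (i : ZMod p)⁻¹ := by
    have : (m : ZMod p) * i = (-1) ^ (i - 1) := by
      rw [← Nat.cast_mul, hmi, hchoose]
    field_simp [hine] at this ⊢
    rw [this]
  rw [hmval]
  have : (-1 : ZMod p) ^ i = -(-1) ^ (i - 1) := by
    conv_lhs => rw [show i = (i - 1) + 1 by omega]
    rw [pow_succ]; ring
  rw [this]; ring
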